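/- arXiv:2101.00312 — 3 statements merged into one kernel-verified Lean document; each statement's English description precedes it below -/
import Mathlib

section
/- Let T and S be bounded linear operators on H admitting reduced A-adjoints T^♯ and S^♯. Then ‖TS^♯‖_A = ‖ST^♯‖_A. -/
open ContinuousLinearMap

variable {H : Type*} [NormedAddCommGroup H] [InnerProductSpace ℂ H] [CompleteSpace H]

/-- The seminorm on `H` induced by a positive operator `A`: `‖x‖_A = √⟨Ax,x⟩`. -/
noncomputable def vnA (A : H →L[ℂ] H) (x : H) : ℝ :=
  Real.sqrt (RCLike.re (inner ℂ (A x) x : ℂ))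

/-- The `A`-seminorm of an operator: `‖X‖_A = sup {‖Xx‖_A : ‖x‖_A = 1}`. -/
noncomputable def opnA (A : H →L[ℂ] H) (X : H →L[ℂ] H) : ℝ :=
  sSup ((fun x => vnA A (X x)) '' {x : H | vnA A x = 1})

/-- The `A`-numerical radius: `ω_A(X) = sup {|⟨Xx,x⟩_A| : ‖x‖_A = 1}`. -/
noncomputable def wA (A : H →L[ℂ] H) (X : H →L[ℂ] H) : ℝ :=
  sSup ((fun x => ‖(inner ℂ (A (X x)) x : ℂ)‖) '' {x : H | vnA A x = 1})

/-- `S` is the reduced `A`-adjoint of `T`: `A ∘ S = T* ∘ A` and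
`range S ⊆ closure (range A)`. -/
def IsReducedAdjA (A T S : H →L[ℂ] H) : Prop :=
  A ∘L S = (ContinuousLinearMap.adjoint T) ∘L A ∧
    Set.range S ⊆ closure (Set.range (A : H → H))

/-- `X` is `A`-selfadjoint: `A ∘ X = X* ∘ A`. -/
def IsSelfAdjA (A X : H →L[ℂ] H) : Prop :=
  A ∘L X = (ContinuousLinearMap.adjoint X) ∘L A

/-- `Re_A(T) = (T + T♯)/2`. -/
noncomputable def ReA (T Ts : H →L[ℂ] H) : H →L[ℂ] H := (2 : ℂ)⁻¹ • (T + Ts)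

/-- `Im_A(T) = (T - T♯)/(2i)`. -/
noncomputable def ImA (T Ts : H →L[ℂ] H) : H →L[ℂ] H := (2 * Complex.I)⁻¹ • (T - Ts)


lemma sSup_eq_of_mutual {s t : Set ℝ}
    (h1 : ∀ a ∈ s, ∃ b ∈ t, a ≤ b) (h2 : ∀ b ∈ t, ∃ a ∈ s, b ≤ a) :
    sSup s = sSup t := by
  rcases s.eq_empty_or_nonempty with hs | hs
  · rcases t.eq_empty_or_nonempty with ht | ht
    · rw [hs, ht]
    · obtain ⟨b, hb⟩ := ht
      obtain ⟨a, ha, -⟩ := h2 b hb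
      simp [hs] at ha
  · have ht : t.Nonempty := by
      obtain ⟨a, ha⟩ := hs
      obtain ⟨b, hb, -⟩ := h1 a ha
      exact ⟨b, hb⟩
    by_cases hbt : BddAbove t
    · have hbs : BddAbove s := ⟨sSup t, fun a ha => by
        obtain ⟨b, hb, hab⟩ := h1 a ha
        exact hab.trans (le_csSup hbt hb)⟩
      apply le_antisymm
      · exact csSup_le hs fun a ha => by
          obtain ⟨b, hb, hab⟩ := h1 a ha
          exact hab.trans (le_csSup hbt hb)
      · exact csSup_le ht fun b hb => by
          obtain ⟨a, ha, hba⟩ := h2 b hb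
          exact hba.trans (le_csSup hbs ha)
    · have hbs : ¬ BddAbove s := fun ⟨u, hu⟩ => hbt ⟨u, fun b hb => by
        obtain ⟨a, ha, hba⟩ := h2 b hb
        exact hba.trans (hu ha)⟩
      rw [Real.sSup_of_not_bddAbove hbt, Real.sSup_of_not_bddAbove hbs]

set_option synthInstance.maxHeartbeats 1000000 in
lemma key_step (A T S Ts Ss : H →L[ℂ] H) (hA : A.IsPositive)
    (hTs : A ∘L Ts = (ContinuousLinearMap.adjoint T) ∘L A)
    (hSs : A ∘L Ss = (ContinuousLinearMap.adjoint S) ∘L A) :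
    ∀ a ∈ (fun x => vnA A ((T ∘L Ss) x)) '' {x : H | vnA A x = 1},
      ∃ b ∈ (fun x => vnA A ((S ∘L Ts) x)) '' {x : H | vnA A x = 1}, a ≤ b := by
  have h0 : 0 ≤ A := (nonneg_iff_isPositive A).2 hA
  set R := CFC.sqrt A with hRdef
  have h1 : R * R = A := CFC.sqrt_mul_sqrt_self A h0
  have h4 : adjoint R = R := ((nonneg_iff_isPositive R).1 (CFC.sqrt_nonneg A)).isSelfAdjoint
  have hAsa : adjoint A = A := hA.isSelfAdjoint
  have hAR : ∀ z : H, A z = R (R z) := fun z => by rw [← h1]; rfl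
  -- the inner product of the form
  have hform : ∀ u v : H, (inner ℂ (A u) v : ℂ) = inner ℂ (R u) (R v) := fun u v => by
    have h5 := adjoint_inner_left R v (R u)
    rw [h4] at h5
    rw [hAR, h5]
  have vnE : ∀ z : H, vnA A z = ‖R z‖ := fun z => by
    rw [vnA, hform]
    rw [inner_self_eq_norm_sq (𝕜 := ℂ)]
    exact Real.sqrt_sq (norm_nonneg _)
  -- Cauchy-Schwarz
  have hCS : ∀ u v : H, ‖(inner ℂ (A u) v : ℂ)‖ ≤ vnA A u * vnA A v := fun u v => by
    rw [hform, vnE, vnE]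
    exact norm_inner_le_norm _ _
  -- A ∘ T = Ts* ∘ A
  have hAT : A ∘L T = (adjoint Ts) ∘L A := by
    have := congrArg adjoint hTs
    rw [adjoint_comp, adjoint_comp, adjoint_adjoint, hAsa] at this
    exact this.symm
  -- cross identity
  have cross : ∀ u v : H,
      (inner ℂ (A ((T ∘L Ss) u)) v : ℂ) =
        (starRingEnd ℂ) (inner ℂ (A ((S ∘L Ts) v)) u) := by
    intro u v
    have e1 : A ((T ∘L Ss) u) = (adjoint Ts) ((adjoint S) (A u)) := by
      have g1 : A (T (Ss u)) = (adjoint Ts) (A (Ss u)) :=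
        congrFun (congrArg DFunLike.coe hAT) (Ss u)
      have g2 : A (Ss u) = (adjoint S) (A u) :=
        congrFun (congrArg DFunLike.coe hSs) u
      simp only [comp_apply]
      rw [g1, g2]
    rw [e1, adjoint_inner_left, adjoint_inner_left, inner_conj_symm]
    simp only [comp_apply]
    have h6 := adjoint_inner_left A (S (Ts v)) u
    rw [hAsa] at h6
    exact h6
  rintro a ⟨x, hx, rfl⟩
  simp only [Set.mem_setOf_eq] at hx
  show ∃ b ∈ (fun x => vnA A ((S ∘L Ts) x)) '' {x : H | vnA A x = 1},
    vnA A ((T ∘L Ss) x) ≤ b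
  set z := (T ∘L Ss) x with hz
  by_cases hc : vnA A z = 0
  · refine ⟨vnA A ((S ∘L Ts) x), ⟨x, hx, rfl⟩, ?_⟩
    rw [hc, vnE]
    exact norm_nonneg _
  · set c := vnA A z with hcdef
    have hc0 : 0 < c := lt_of_le_of_ne (Real.sqrt_nonneg _) (Ne.symm hc)
    set y := ((c : ℂ))⁻¹ • z with hy
    have hy1 : vnA A y = 1 := by
      rw [vnE, hy, map_smul, norm_smul]
      simp only [norm_inv, Complex.norm_real, Real.norm_eq_abs, abs_of_pos hc0]
      rw [← vnE, ← hcdef]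
      exact inv_mul_cancel₀ (ne_of_gt hc0)
    refine ⟨vnA A ((S ∘L Ts) y), ⟨y, hy1, rfl⟩, ?_⟩
    have h5 : (inner ℂ (A z) y : ℂ) = (c : ℂ) := by
      rw [hy, inner_smul_right, hform, inner_self_eq_norm_sq_to_K, ← vnE, ← hcdef]
      have : (c : ℂ) ≠ 0 := by exact_mod_cast ne_of_gt hc0
      field_simp
      rfl
    have h6 : c = ‖(inner ℂ (A z) y : ℂ)‖ := by
      rw [h5, Complex.norm_real, Real.norm_eq_abs, abs_of_pos hc0]
    calc c = ‖(inner ℂ (A z) y : ℂ)‖ := h6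
      _ = ‖(inner ℂ (A ((S ∘L Ts) y)) x : ℂ)‖ := by rw [hz, cross x y, RCLike.norm_conj]
      _ ≤ vnA A ((S ∘L Ts) y) * vnA A x := hCS _ _
      _ = vnA A ((S ∘L Ts) y) := by rw [hx, mul_one]

theorem stmt16 (A T S Ts Ss : H →L[ℂ] H) (hA : A.IsPositive) (hA0 : A ≠ 0)
    (hTs : IsReducedAdjA A T Ts) (hSs : IsReducedAdjA A S Ss) :
    opnA A (T ∘L Ss) = opnA A (S ∘L Ts) := by
  rw [opnA, opnA]
  exact sSup_eq_of_mutual (key_step A T S Ts Ss hA hTs.1 hSs.1)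
    (key_step A S T Ss Ts hA hSs.1 hTs.1)
end

section
/- Let T and S be bounded linear operators on H that are A-selfadjoint. Then ‖TS‖_A = ‖ST‖_A. -/
open ContinuousLinearMap

variable {H : Type*} [NormedAddCommGroup H] [InnerProductSpace ℂ H] [CompleteSpace H]

set_option synthInstance.maxHeartbeats 1000000
set_option maxHeartbeats 1000000

lemma sqrtA_apply_apply (A : H →L[ℂ] H) (hA : A.IsPositive) (x : H) :
    CFC.sqrt A (CFC.sqrt A x) = A x := by
  conv_rhs => rw [← CFC.sq_sqrt A ((ContinuousLinearMap.nonneg_iff_isPositive A).2 hA)]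
  rw [pow_two, ContinuousLinearMap.mul_apply]

lemma sqrtA_selfAdjoint (A : H →L[ℂ] H) : IsSelfAdjoint (CFC.sqrt A) :=
  IsSelfAdjoint.of_nonneg (CFC.sqrt_nonneg A)

lemma innerA_eq (A : H →L[ℂ] H) (hA : A.IsPositive) (x y : H) :
    (inner ℂ (A x) y : ℂ) = inner ℂ (CFC.sqrt A x) (CFC.sqrt A y) := by
  have h := ContinuousLinearMap.adjoint_inner_left (CFC.sqrt A) y (CFC.sqrt A x)
  rw [(sqrtA_selfAdjoint A).adjoint_eq] at h
  rw [← sqrtA_apply_apply A hA x, h]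

lemma vnA_eq (A : H →L[ℂ] H) (hA : A.IsPositive) (x : H) :
    vnA A x = ‖CFC.sqrt A x‖ := by
  rw [vnA, innerA_eq A hA, inner_self_eq_norm_sq, Real.sqrt_sq (norm_nonneg _)]

lemma csA (A : H →L[ℂ] H) (hA : A.IsPositive) (x y : H) :
    ‖(inner ℂ (A x) y : ℂ)‖ ≤ vnA A x * vnA A y := by
  rw [innerA_eq A hA, vnA_eq A hA, vnA_eq A hA]
  exact norm_inner_le_norm _ _

lemma keyA (A T S : H →L[ℂ] H) (hA : A.IsPositive)
    (hT : IsSelfAdjA A T) (hS : IsSelfAdjA A S) (x y : H) :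
    ‖(inner ℂ (A ((T ∘L S) x)) y : ℂ)‖ = ‖(inner ℂ (A ((S ∘L T) y)) x : ℂ)‖ := by
  have hT' : ∀ z, A (T z) = ContinuousLinearMap.adjoint T (A z) :=
    fun z => ContinuousLinearMap.ext_iff.mp hT z
  have hS' : ∀ z, A (S z) = ContinuousLinearMap.adjoint S (A z) :=
    fun z => ContinuousLinearMap.ext_iff.mp hS z
  have h1 : (inner ℂ (A ((T ∘L S) x)) y : ℂ) = inner ℂ x (A ((S ∘L T) y)) := by
    rw [ContinuousLinearMap.comp_apply, hT', hS', ContinuousLinearMap.adjoint_inner_left,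
      ContinuousLinearMap.adjoint_inner_left]
    conv_lhs => rw [← hA.isSelfAdjoint.adjoint_eq, ContinuousLinearMap.adjoint_inner_left]
    rfl
  rw [h1, norm_inner_symm]

lemma transferA (A T S : H →L[ℂ] H) (hA : A.IsPositive)
    (hT : IsSelfAdjA A T) (hS : IsSelfAdjA A S) {c : ℝ} (hc0 : 0 ≤ c)
    (hub : ∀ y, vnA A y = 1 → vnA A ((S ∘L T) y) ≤ c) :
    ∀ x, vnA A x = 1 → vnA A ((T ∘L S) x) ≤ c := by
  intro x hx
  set u := (T ∘L S) x with hu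
  set n := vnA A u with hn
  have hn0 : 0 ≤ n := Real.sqrt_nonneg _
  rcases hn0.eq_or_lt with h0 | hpos
  · exact h0 ▸ hc0
  · set y := ((n : ℂ)⁻¹) • u with hy
    have hny : vnA A y = 1 := by
      rw [vnA_eq A hA, hy, map_smul, norm_smul, ← vnA_eq A hA, ← hn]
      simp [abs_of_pos hpos]
      field_simp
    have hnne : (n : ℂ) ≠ 0 := by exact_mod_cast ne_of_gt hpos
    have hsum : (inner ℂ (A u) u : ℂ) = (n : ℂ) * inner ℂ (A u) y := by
      rw [hy, inner_smul_right, ← mul_assoc, mul_inv_cancel₀ hnne, one_mul]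
    have hsq : n ^ 2 = RCLike.re (inner ℂ (A u) u : ℂ) := by
      rw [hn, vnA, Real.sq_sqrt (hA.re_inner_nonneg_left u)]
    have hle : n ^ 2 ≤ n * ‖(inner ℂ (A u) y : ℂ)‖ := by
      rw [hsq, hsum]
      calc RCLike.re ((n : ℂ) * inner ℂ (A u) y) ≤ ‖(n : ℂ) * (inner ℂ (A u) y : ℂ)‖ :=
            RCLike.re_le_norm _
        _ = n * ‖(inner ℂ (A u) y : ℂ)‖ := by
            rw [norm_mul, Complex.norm_real, Real.norm_of_nonneg hn0]
    have hkey : ‖(inner ℂ (A u) y : ℂ)‖ = ‖(inner ℂ (A ((S ∘L T) y)) x : ℂ)‖ :=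
      keyA A T S hA hT hS x y
    have hcs : ‖(inner ℂ (A ((S ∘L T) y)) x : ℂ)‖ ≤ c := by
      calc ‖(inner ℂ (A ((S ∘L T) y)) x : ℂ)‖ ≤ vnA A ((S ∘L T) y) * vnA A x :=
            csA A hA _ _
        _ ≤ c * 1 := mul_le_mul (hub y hny) (le_of_eq hx) (Real.sqrt_nonneg _) hc0
        _ = c := mul_one c
    have : n * n ≤ n * c := by
      calc n * n = n ^ 2 := (pow_two n).symm
        _ ≤ n * ‖(inner ℂ (A u) y : ℂ)‖ := hle
        _ ≤ n * c := by
            apply mul_le_mul_of_nonneg_left _ hn0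
            rw [hkey]; exact hcs
    exact le_of_mul_le_mul_left this hpos

lemma sSup_eq_of_upperBounds {s t : Set ℝ} (hs : s.Nonempty) (ht : t.Nonempty)
    (h : upperBounds s = upperBounds t) : sSup s = sSup t := by
  by_cases hb : BddAbove s
  · have h1 : IsLUB s (sSup s) := isLUB_csSup hs hb
    have h2 : IsLUB t (sSup s) := by
      have h3 : IsLeast (upperBounds s) (sSup s) := h1
      rw [h] at h3
      exact h3
    exact (h2.csSup_eq ht).symm
  · have hb' : ¬ BddAbove t := by
      intro hbt
      apply hb
      have h3 : (upperBounds t).Nonempty := hbt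
      rw [← h] at h3
      exact h3
    rw [Real.sSup_of_not_bddAbove hb, Real.sSup_of_not_bddAbove hb']

theorem stmt17 (A T S : H →L[ℂ] H) (hA : A.IsPositive) (hA0 : A ≠ 0)
    (hT : IsSelfAdjA A T) (hS : IsSelfAdjA A S) :
    opnA A (T ∘L S) = opnA A (S ∘L T) := by
  -- nonempty sphere
  have hBne : CFC.sqrt A ≠ 0 := by
    intro h
    apply hA0
    rw [← CFC.sq_sqrt A ((ContinuousLinearMap.nonneg_iff_isPositive A).2 hA), h]
    simp
  obtain ⟨x0, hx0⟩ : ∃ x, CFC.sqrt A x ≠ 0 := by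
    by_contra h
    push_neg at h
    exact hBne (ContinuousLinearMap.ext fun x => by rw [h x]; rfl)
  have hr : 0 < ‖CFC.sqrt A x0‖ := norm_pos_iff.mpr hx0
  set z := ((‖CFC.sqrt A x0‖ : ℂ)⁻¹) • x0 with hz
  have hz1 : vnA A z = 1 := by
    rw [vnA_eq A hA, hz, map_smul, norm_smul]
    simp [abs_of_pos hr]
    field_simp
  have hne1 : ((fun x => vnA A ((T ∘L S) x)) '' {x : H | vnA A x = 1}).Nonempty :=
    ⟨_, ⟨z, hz1, rfl⟩⟩
  have hne2 : ((fun x => vnA A ((S ∘L T) x)) '' {x : H | vnA A x = 1}).Nonempty :=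
    ⟨_, ⟨z, hz1, rfl⟩⟩
  apply sSup_eq_of_upperBounds hne1 hne2
  ext c
  have hmem : ∀ (X : H →L[ℂ] H),
      c ∈ upperBounds ((fun x => vnA A (X x)) '' {x : H | vnA A x = 1}) ↔
      ∀ x, vnA A x = 1 → vnA A (X x) ≤ c := by
    intro X
    constructor
    · intro h x hx; exact h ⟨x, hx, rfl⟩
    · rintro h _ ⟨x, hx, rfl⟩; exact h x hx
  rw [hmem, hmem]
  constructor
  · intro h
    have hc0 : 0 ≤ c := le_trans (Real.sqrt_nonneg _) (h z hz1)
    exact fun x hx => transferA A S T hA hS hT hc0 h x hx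
  · intro h
    have hc0 : 0 ≤ c := le_trans (Real.sqrt_nonneg _) (h z hz1)
    exact fun x hx => transferA A T S hA hT hS hc0 h x hx
end

section
/- Let T be a bounded linear operator on H admitting a reduced A-adjoint T^♯. Then (1/4)·‖T^♯T + TT^♯‖_A ≤ (1/2)·√(‖Re_A(T)⁴ + Im_A(T)⁴‖_A + 2‖Im_A(T)²·Re_A(T)²‖_A). -/
open ContinuousLinearMap

variable {H : Type*} [NormedAddCommGroup H] [InnerProductSpace ℂ H] [CompleteSpace H]

namespace Stmt19Aux

lemma star_apply_inner' (W : H →L[ℂ] H) (u v : H) :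
    (inner ℂ ((star W) u) v : ℂ) = inner ℂ u (W v) := by
  rw [ContinuousLinearMap.star_eq_adjoint, ContinuousLinearMap.adjoint_inner_left]

lemma star_apply_inner (B : H →L[ℂ] H) (hB : star B = B) (u v : H) :
    (inner ℂ (B u) v : ℂ) = inner ℂ u (B v) := by
  conv_lhs => rw [← hB, star_apply_inner']

lemma reA_eq (A B : H →L[ℂ] H) (hB : star B = B) (hBA : B * B = A) (v : H) :
    RCLike.re (inner ℂ (A v) v : ℂ) = ‖B v‖ ^ 2 := by
  have hAx : A v = B (B v) := by rw [← hBA]; rfl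
  have h2 : (inner ℂ (A v) v : ℂ) = inner ℂ (B v) (B v) := by
    rw [hAx, star_apply_inner B hB (B v) v]
  rw [h2, inner_self_eq_norm_sq (𝕜 := ℂ)]

lemma vnA_eq (A B : H →L[ℂ] H) (hB : star B = B) (hBA : B * B = A) (x : H) :
    vnA A x = ‖B x‖ := by
  rw [vnA, reA_eq A B hB hBA, Real.sqrt_sq (norm_nonneg _)]

lemma pair_mul {A Z₁ W₁ Z₂ W₂ : H →L[ℂ] H} (h1 : A * Z₁ = star W₁ * A)
    (h2 : A * Z₂ = star W₂ * A) : A * (Z₁ * Z₂) = star (W₂ * W₁) * A := by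
  rw [star_mul, ← mul_assoc, h1, mul_assoc, h2, mul_assoc]

lemma pair_pow {A Z : H →L[ℂ] H} (h : A * Z = star Z * A) (k : ℕ) :
    A * (Z ^ k) = star (Z ^ k) * A := by
  induction k with
  | zero => simp
  | succ n ih =>
      have := pair_mul ih h
      rw [← pow_succ, ← pow_succ'] at this
      exact this

/-- the key Cauchy–Schwarz step -/
lemma key (A B : H →L[ℂ] H) (hB : star B = B) (hBA : B * B = A)
    {Z W : H →L[ℂ] H} (hZ : A * Z = star W * A) (x : H) :
    ‖B (Z x)‖ ^ 2 ≤ ‖B x‖ * ‖B ((W * Z) x)‖ := by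
  have h1 : A (Z x) = star W (A x) := by
    have := congrArg (fun M : H →L[ℂ] H => M x) hZ
    simpa [ContinuousLinearMap.mul_apply] using this
  have hAx : A x = B (B x) := by rw [← hBA]; rfl
  calc ‖B (Z x)‖ ^ 2 = RCLike.re (inner ℂ (A (Z x)) (Z x) : ℂ) :=
        (reA_eq A B hB hBA _).symm
    _ = RCLike.re (inner ℂ (B x) (B (W (Z x))) : ℂ) := by
        rw [h1, star_apply_inner', hAx, star_apply_inner B hB]
    _ ≤ ‖B x‖ * ‖B (W (Z x))‖ := re_inner_le_norm _ _
    _ = ‖B x‖ * ‖B ((W * Z) x)‖ := by rw [ContinuousLinearMap.mul_apply]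

lemma growth (A B : H →L[ℂ] H) (hB : star B = B) (hBA : B * B = A)
    {Z : H →L[ℂ] H} (hZ : A * Z = star Z * A) (x : H) (hx : ‖B x‖ = 1) (n : ℕ) :
    ‖B (Z x)‖ ^ (2 ^ n) ≤ ‖B ((Z ^ (2 ^ n)) x)‖ := by
  induction n with
  | zero => simp
  | succ n ih =>
      have hk := key A B hB hBA (pair_pow hZ (2 ^ n)) x
      rw [hx, one_mul, ← pow_add] at hk
      have h2 : (2 : ℕ) ^ n + 2 ^ n = 2 ^ (n + 1) := by ring
      rw [h2] at hk
      calc ‖B (Z x)‖ ^ 2 ^ (n + 1) = (‖B (Z x)‖ ^ 2 ^ n) ^ 2 := by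
            rw [← pow_mul, pow_succ]
        _ ≤ ‖B ((Z ^ 2 ^ n) x)‖ ^ 2 := pow_le_pow_left₀ (pow_nonneg (norm_nonneg _) _) ih 2
        _ ≤ ‖B ((Z ^ 2 ^ (n + 1)) x)‖ := hk

lemma selfadj_bound (A B : H →L[ℂ] H) (hB : star B = B) (hBA : B * B = A)
    {Z : H →L[ℂ] H} (hZ : A * Z = star Z * A) (x : H) (hx : ‖B x‖ = 1) :
    ‖B (Z x)‖ ≤ ‖Z‖ := by
  by_contra hcon
  push_neg at hcon
  set c := ‖B (Z x)‖ with hc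
  set M := ‖Z‖ with hM
  have hM0 : 0 ≤ M := norm_nonneg _
  have hc0 : 0 < c := lt_of_le_of_lt hM0 hcon
  set K := ‖B‖ * ‖x‖ with hK
  have hcap : ∀ n : ℕ, c ^ (2 ^ n) ≤ K * M ^ (2 ^ n) := by
    intro n
    refine (growth A B hB hBA hZ x hx n).trans ?_
    calc ‖B ((Z ^ 2 ^ n) x)‖ ≤ ‖B‖ * ‖(Z ^ 2 ^ n) x‖ := le_opNorm _ _
      _ ≤ ‖B‖ * (‖Z ^ 2 ^ n‖ * ‖x‖) :=
          mul_le_mul_of_nonneg_left (le_opNorm _ _) (norm_nonneg _)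
      _ ≤ ‖B‖ * (‖Z‖ ^ 2 ^ n * ‖x‖) :=
          mul_le_mul_of_nonneg_left
            (mul_le_mul_of_nonneg_right
              (norm_pow_le' Z (by positivity)) (norm_nonneg _))
            (norm_nonneg _)
      _ = K * M ^ (2 ^ n) := by rw [hK]; ring
  rcases eq_or_lt_of_le hM0 with hM0' | hMpos
  · have h0 := hcap 0
    rw [← hM0'] at h0
    simp at h0
    linarith
  · have hr : 1 < c / M := (one_lt_div hMpos).mpr hcon
    obtain ⟨n, hn⟩ := pow_unbounded_of_one_lt K hr
    have h1 : (c / M) ^ n ≤ (c / M) ^ (2 ^ n) :=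
      pow_le_pow_right₀ hr.le (Nat.lt_two_pow_self (n := n)).le
    have h2 : (c / M) ^ (2 ^ n) ≤ K := by
      rw [div_pow, div_le_iff₀ (pow_pos hMpos _)]
      exact hcap n
    exact absurd (hn.trans_le (h1.trans h2)) (lt_irrefl K)

end Stmt19Aux

namespace Stmt19Aux

lemma vnA_nonneg (A : H →L[ℂ] H) (x : H) : 0 ≤ vnA A x := Real.sqrt_nonneg _

lemma opnA_nonneg (A Z : H →L[ℂ] H) : 0 ≤ opnA A Z := by
  apply Real.sSup_nonneg
  rintro _ ⟨x, hx, rfl⟩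
  exact vnA_nonneg A _

lemma bddA {A Z : H →L[ℂ] H} {C : ℝ} (hC : ∀ x, vnA A x = 1 → vnA A (Z x) ≤ C) :
    BddAbove ((fun x => vnA A (Z x)) '' {x : H | vnA A x = 1}) := by
  refine ⟨C, ?_⟩
  rintro _ ⟨x, hx, rfl⟩
  exact hC x hx

lemma le_opnA {A Z : H →L[ℂ] H} {C : ℝ} (hC : ∀ x, vnA A x = 1 → vnA A (Z x) ≤ C)
    {x : H} (hx : vnA A x = 1) : vnA A (Z x) ≤ opnA A Z :=
  le_csSup (bddA hC) ⟨x, hx, rfl⟩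

lemma opnA_le {A Z : H →L[ℂ] H} {C : ℝ} (hC0 : 0 ≤ C)
    (hC : ∀ x, vnA A x = 1 → vnA A (Z x) ≤ C) : opnA A Z ≤ C := by
  apply Real.sSup_le _ hC0
  rintro _ ⟨x, hx, rfl⟩
  exact hC x hx

lemma selfadj_bound' (A B : H →L[ℂ] H) (hB : star B = B) (hBA : B * B = A)
    {Z : H →L[ℂ] H} (hZ : A * Z = star Z * A) :
    ∀ x, vnA A x = 1 → vnA A (Z x) ≤ ‖Z‖ := by
  intro x hx
  rw [vnA_eq A B hB hBA] at hx ⊢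
  exact selfadj_bound A B hB hBA hZ x hx

lemma pair_bound' (A B : H →L[ℂ] H) (hB : star B = B) (hBA : B * B = A)
    {Z W : H →L[ℂ] H} (hZ : A * Z = star W * A) (hW : A * W = star Z * A) :
    ∀ x, vnA A x = 1 → vnA A (Z x) ≤ Real.sqrt ‖W * Z‖ := by
  intro x hx
  rw [vnA_eq A B hB hBA] at hx ⊢
  have h1 : ‖B (Z x)‖ ^ 2 ≤ ‖B ((W * Z) x)‖ := by
    simpa [hx] using key A B hB hBA hZ x
  have h2 : ‖B ((W * Z) x)‖ ≤ ‖W * Z‖ :=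
    selfadj_bound A B hB hBA (pair_mul hW hZ) x hx
  calc ‖B (Z x)‖ = Real.sqrt (‖B (Z x)‖ ^ 2) := (Real.sqrt_sq (norm_nonneg _)).symm
    _ ≤ Real.sqrt ‖W * Z‖ := Real.sqrt_le_sqrt (h1.trans h2)

lemma hom_bound (A B : H →L[ℂ] H) (hB : star B = B) (hBA : B * B = A)
    {Z W : H →L[ℂ] H} (hZ : A * Z = star W * A) (hW : A * W = star Z * A) (u : H) :
    ‖B (Z u)‖ ≤ opnA A Z * ‖B u‖ := by
  rcases eq_or_ne ‖B u‖ 0 with h0 | h0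
  · have hBu : B u = 0 := norm_eq_zero.mp h0
    have hAu : A u = 0 := by
      have : A u = B (B u) := by rw [← hBA]; rfl
      rw [this, hBu, map_zero]
    have hAZu : A (Z u) = 0 := by
      have := congrArg (fun M : H →L[ℂ] H => M u) hZ
      simp only [ContinuousLinearMap.mul_apply] at this
      rw [this, hAu, map_zero]
    have : ‖B (Z u)‖ ^ 2 = 0 := by
      rw [← reA_eq A B hB hBA, hAZu]
      simp
    have hz : ‖B (Z u)‖ = 0 := by
      have := sq_eq_zero_iff.mp this
      exact this
    rw [hz, h0, mul_zero]
  · have ht : 0 < ‖B u‖ := (norm_nonneg _).lt_of_ne' h0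
    set t : ℝ := ‖B u‖ with htdef
    set x : H := ((t⁻¹ : ℝ) : ℂ) • u with hxdef
    have hx1 : vnA A x = 1 := by
      rw [vnA_eq A B hB hBA, hxdef, map_smul, norm_smul]
      simp [Complex.norm_real, abs_inv, abs_of_pos ht, ← htdef,
        inv_mul_cancel₀ ht.ne']
    have hle : vnA A (Z x) ≤ opnA A Z :=
      le_opnA (pair_bound' A B hB hBA hZ hW) hx1
    rw [vnA_eq A B hB hBA, hxdef, map_smul, map_smul, norm_smul] at hle
    simp only [Complex.norm_real, Real.norm_eq_abs, abs_inv, abs_of_pos ht] at hle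
    calc ‖B (Z u)‖ = t * (t⁻¹ * ‖B (Z u)‖) := by
          field_simp
      _ ≤ t * opnA A Z := by
          exact mul_le_mul_of_nonneg_left hle ht.le
      _ = opnA A Z * t := mul_comm _ _

end Stmt19Aux

open Stmt19Aux in
theorem stmt19 (A T Ts : H →L[ℂ] H) (hA : A.IsPositive) (hA0 : A ≠ 0)
    (hTs : IsReducedAdjA A T Ts) :
    (1/4) * opnA A (Ts ∘L T + T ∘L Ts) ≤
      (1/2) * Real.sqrt (opnA A ((ReA T Ts) ^ (4:ℕ) + (ImA T Ts) ^ (4:ℕ)) +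
        2 * opnA A (((ImA T Ts) ^ (2:ℕ)) ∘L ((ReA T Ts) ^ (2:ℕ)))) := by
  -- square root of A
  have h0A : (0 : H →L[ℂ] H) ≤ A := (ContinuousLinearMap.nonneg_iff_isPositive A).mpr hA
  obtain ⟨B, hB, hBA⟩ : ∃ B : H →L[ℂ] H, star B = B ∧ B * B = A :=
    ⟨CFC.sqrt A, (ContinuousLinearMap.nonneg_iff_isPositive _ |>.mp (CFC.sqrt_nonneg A)).isSelfAdjoint,
      CFC.sqrt_mul_sqrt_self A h0A⟩
  have hA' : star A = A := hA.isSelfAdjoint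
  -- basic adjoint relations
  have h : A * Ts = star T * A := by
    have h0 := hTs.1
    rw [← ContinuousLinearMap.star_eq_adjoint] at h0
    exact h0
  have h2 : A * T = star Ts * A := by
    have := congrArg star h
    simp only [star_mul, hA', star_star] at this
    exact this.symm
  set R := ReA T Ts with hRdef
  set J := ImA T Ts with hJdef
  have hR : A * R = star R * A := by
    simp only [hRdef, ReA, mul_smul_comm, smul_mul_assoc, star_smul, mul_add, add_mul,
      star_add, h, h2, Complex.star_def, map_inv₀, Complex.conj_ofNat]
    rw [add_comm]
  have hJ : A * J = star J * A := by
    have hc : star ((2 * Complex.I)⁻¹) = -((2 * Complex.I)⁻¹) := by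
      simp [Complex.star_def, map_inv₀, Complex.conj_I, mul_neg, inv_neg]
    simp only [hJdef, ImA, mul_smul_comm, smul_mul_assoc, star_smul, mul_sub, sub_mul,
      star_sub, h, h2, hc, neg_smul, neg_sub, smul_sub, smul_neg, neg_neg, neg_mul]
    abel
  -- derived relations
  have hR2 := pair_pow hR 2
  have hJ2 := pair_pow hJ 2
  set X : H →L[ℂ] H := R ^ 2 + J ^ 2 with hXdef
  set P : H →L[ℂ] H := R ^ 4 + J ^ 4 with hPdef
  set Q : H →L[ℂ] H := J ^ 2 * R ^ 2 with hQdef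
  set Q' : H →L[ℂ] H := R ^ 2 * J ^ 2 with hQ'def
  have hX : A * X = star X * A := by
    rw [hXdef, mul_add, hR2, hJ2, star_add, add_mul]
  have hP : A * P = star P * A := by
    rw [hPdef, mul_add, pair_pow hR 4, pair_pow hJ 4, star_add, add_mul]
  have hXX : A * (X * X) = star (X * X) * A := pair_mul hX hX
  have hQ : A * Q = star Q' * A := pair_mul hJ2 hR2
  have hQ' : A * Q' = star Q * A := pair_mul hR2 hJ2
  -- the sum identity
  have hsum : Ts ∘L T + T ∘L Ts = (2:ℂ) • X := by
    simp only [hXdef, hRdef, hJdef, ReA, ImA, pow_two, smul_mul_smul_comm,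
      ContinuousLinearMap.mul_def]
    ext x
    simp only [ContinuousLinearMap.add_apply, ContinuousLinearMap.smul_apply,
      ContinuousLinearMap.comp_apply, ContinuousLinearMap.sub_apply, map_add, map_sub]
    have hI : ((2 : ℂ) * Complex.I)⁻¹ * (2 * Complex.I)⁻¹ = -(4:ℂ)⁻¹ := by
      rw [← mul_inv]
      norm_num [mul_mul_mul_comm, Complex.I_mul_I]
    rw [hI]
    have h2' : ((2:ℂ)⁻¹ * 2⁻¹) = (4:ℂ)⁻¹ := by norm_num
    rw [h2']
    module
  have hXXid : X * X = P + Q' + Q := by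
    rw [hXdef, hPdef, hQdef, hQ'def]
    noncomm_ring
  -- step 1 : opnA (Ts T + T Ts) ≤ 2 opnA X
  have step1 : opnA A (Ts ∘L T + T ∘L Ts) ≤ 2 * opnA A X := by
    apply opnA_le (by linarith [opnA_nonneg A X])
    intro x hx
    have hvx : vnA A ((Ts ∘L T + T ∘L Ts) x) = 2 * vnA A (X x) := by
      rw [hsum, vnA_eq A B hB hBA, vnA_eq A B hB hBA]
      rw [ContinuousLinearMap.smul_apply, map_smul, norm_smul]
      norm_num
    rw [hvx]
    have := le_opnA (selfadj_bound' A B hB hBA hX) hx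
    linarith
  -- step 2 : opnA X ≤ sqrt (opnA (X*X))
  have step2 : opnA A X ≤ Real.sqrt (opnA A (X * X)) := by
    apply opnA_le (Real.sqrt_nonneg _)
    intro x hx
    have hx' : ‖B x‖ = 1 := by rw [← vnA_eq A B hB hBA]; exact hx
    have h1 : ‖B (X x)‖ ^ 2 ≤ ‖B ((X * X) x)‖ := by
      simpa [hx'] using key A B hB hBA hX x
    have h2' : vnA A ((X * X) x) ≤ opnA A (X * X) :=
      le_opnA (selfadj_bound' A B hB hBA hXX) hx
    rw [vnA_eq A B hB hBA] at h2' ⊢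
    calc ‖B (X x)‖ = Real.sqrt (‖B (X x)‖ ^ 2) := (Real.sqrt_sq (norm_nonneg _)).symm
      _ ≤ Real.sqrt (opnA A (X * X)) := Real.sqrt_le_sqrt (h1.trans h2')
  -- step 3 : opnA (X*X) ≤ opnA P + opnA Q' + opnA Q
  have step3 : opnA A (X * X) ≤ opnA A P + opnA A Q' + opnA A Q := by
    have hnn : (0:ℝ) ≤ opnA A P + opnA A Q' + opnA A Q := by
      have := opnA_nonneg A P; have := opnA_nonneg A Q'; have := opnA_nonneg A Q
      linarith
    apply opnA_le hnn
    intro x hx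
    have htri : vnA A ((X * X) x) ≤ vnA A (P x) + vnA A (Q' x) + vnA A (Q x) := by
      simp only [vnA_eq A B hB hBA]
      have : (X * X) x = P x + Q' x + Q x := by
        rw [hXXid]; simp [ContinuousLinearMap.add_apply]
      rw [this, map_add, map_add]
      exact (norm_add_le _ _).trans (by linarith [norm_add_le (B (P x)) (B (Q' x))])
    refine htri.trans ?_
    have hP' := le_opnA (selfadj_bound' A B hB hBA hP) hx
    have hQ'b := le_opnA (pair_bound' A B hB hBA hQ' hQ) hx
    have hQb := le_opnA (pair_bound' A B hB hBA hQ hQ') hx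
    linarith
  -- step 4 : opnA Q' ≤ opnA Q
  have step4 : opnA A Q' ≤ opnA A Q := by
    apply opnA_le (opnA_nonneg A Q)
    intro x hx
    have hx' : ‖B x‖ = 1 := by rw [← vnA_eq A B hB hBA]; exact hx
    rw [vnA_eq A B hB hBA]
    set a := ‖B (Q' x)‖ with hadef
    have h1 : a ^ 2 ≤ ‖B ((Q * Q') x)‖ := by
      simpa [hx'] using key A B hB hBA hQ' x
    have h2' : ‖B ((Q * Q') x)‖ ≤ opnA A Q * a := by
      rw [ContinuousLinearMap.mul_apply]
      exact hom_bound A B hB hBA hQ hQ' (Q' x)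
    rcases (norm_nonneg (B (Q' x))).lt_or_eq with ha | ha
    · have : a * a ≤ opnA A Q * a := by rw [← pow_two]; exact h1.trans h2'
      exact le_of_mul_le_mul_right this ha
    · rw [hadef, ← ha]; exact opnA_nonneg A Q
  -- assemble
  have hfin : opnA A X ≤ Real.sqrt (opnA A P + 2 * opnA A Q) := by
    refine step2.trans (Real.sqrt_le_sqrt ?_)
    linarith
  have hQgoal : (J ^ 2) ∘L (R ^ 2) = Q := rfl
  rw [hQgoal]
  have hs := Real.sqrt_nonneg (opnA A P + 2 * opnA A Q)
  linarith
end
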